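/- For integers m, n (not both zero), nonnegative integers r, s with r + s = k - 2 (k ≥ 2), and τ in the upper half-plane, the following telescoping derivative identity holds: ∂/∂τ [ ∑_{r+s=k-2} (τ - τ̄)(X - τY)^r (X - τ̄Y)^s / ((mτ+n)^{r+1}(mτ̄+n)^{s+1}) ] = (k-1)(X - τY)^{k-2}/(mτ+n)^k, as an identity of polynomials in X, Y with coefficients real-analytic in τ (τ̄ treated as constant under ∂/∂τ). -/

import Mathlib

open Complex Finset

lemma linear_ne_zero' (m n : ℤ) (hmn : (m, n) ≠ 0) (z : ℂ) (hz : z.im ≠ 0) :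
    (m : ℂ) * z + n ≠ 0 := by
  intro h
  have him : (m : ℝ) * z.im = 0 := by
    have := congrArg Complex.im h
    simpa [Complex.add_im, Complex.mul_im] using this
  have hm : (m : ℝ) = 0 := by
    rcases mul_eq_zero.mp him with h' | h'
    · exact h'
    · exact absurd h' hz
  have hm0 : m = 0 := by exact_mod_cast hm
  have hre : (m : ℝ) * z.re + n = 0 := by
    have := congrArg Complex.re h
    simpa [Complex.add_re, Complex.mul_re] using this
  have hn0 : n = 0 := by
    rw [hm] at hre
    simp at hre
    exact_mod_cast hre
  exact hmn (by simp [hm0, hn0, Prod.ext_iff])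

lemma key_identity (m n X Y τ c : ℂ) (hp : m * τ + n ≠ 0) (hq : m * c + n ≠ 0)
    (r s : ℕ) :
    ((1 * (X - τ * Y) ^ r + (τ - c) * (↑r * (X - τ * Y) ^ (r - 1) * -(1 * Y))) *
          (X - c * Y) ^ s * ((m * τ + n) ^ (r + 1) * (m * c + n) ^ (s + 1)) -
        (τ - c) * (X - τ * Y) ^ r * (X - c * Y) ^ s *
          ((↑(r + 1) * (m * τ + n) ^ (r + 1 - 1) * (m * 1)) * (m * c + n) ^ (s + 1))) /
      ((m * τ + n) ^ (r + 1) * (m * c + n) ^ (s + 1)) ^ 2 =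
    (↑(r + 1) : ℂ) * (X - τ * Y) ^ r * (X - c * Y) ^ s /
        ((m * τ + n) ^ (r + 2) * (m * c + n) ^ s) -
      (↑r : ℂ) * (X - τ * Y) ^ (r - 1) * (X - c * Y) ^ (s + 1) /
        ((m * τ + n) ^ (r + 1) * (m * c + n) ^ (s + 1)) := by
  rcases r with _ | r
  · rw [div_sub_div _ _ (mul_ne_zero (pow_ne_zero _ hp) (pow_ne_zero _ hq)) (mul_ne_zero (pow_ne_zero _ hp) (pow_ne_zero _ hq)), div_eq_div_iff (pow_ne_zero _ (mul_ne_zero (pow_ne_zero _ hp) (pow_ne_zero _ hq))) (mul_ne_zero (mul_ne_zero (pow_ne_zero _ hp) (pow_ne_zero _ hq)) (mul_ne_zero (pow_ne_zero _ hp) (pow_ne_zero _ hq)))]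
    push_cast
    ring
  · simp only [Nat.succ_sub_one]
    push_cast
    rw [div_sub_div _ _ (mul_ne_zero (pow_ne_zero _ hp) (pow_ne_zero _ hq)) (mul_ne_zero (pow_ne_zero _ hp) (pow_ne_zero _ hq)), div_eq_div_iff (pow_ne_zero _ (mul_ne_zero (pow_ne_zero _ hp) (pow_ne_zero _ hq))) (mul_ne_zero (mul_ne_zero (pow_ne_zero _ hp) (pow_ne_zero _ hq)) (mul_ne_zero (pow_ne_zero _ hp) (pow_ne_zero _ hq)))]
    ring

/-- the telescoping derivative identity
`∂/∂τ ∑_{r+s=k-2} (τ-τ̄)(X-τY)^r(X-τ̄Y)^s/((mτ+n)^{r+1}(mτ̄+n)^{s+1})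
  = (k-1)(X-τY)^{k-2}/(mτ+n)^k`,
where `τ̄` is held constant (Wirtinger derivative), stated for arbitrary values of
the formal variables `X, Y`. -/
theorem telescoping_derivative (m n : ℤ) (hmn : (m, n) ≠ 0) (k : ℕ) (hk : 2 ≤ k)
    (τ X Y : ℂ) (hτ : 0 < τ.im) :
    HasDerivAt
      (fun t : ℂ => ∑ r ∈ Finset.range (k - 1),
        (t - (starRingEnd ℂ) τ) * (X - t * Y) ^ r *
          (X - (starRingEnd ℂ) τ * Y) ^ (k - 2 - r) /
          (((m : ℂ) * t + n) ^ (r + 1) *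
            ((m : ℂ) * (starRingEnd ℂ) τ + n) ^ (k - 2 - r + 1)))
      (((k : ℂ) - 1) * (X - τ * Y) ^ (k - 2) / ((m : ℂ) * τ + n) ^ k)
      τ := by
  set c : ℂ := (starRingEnd ℂ) τ with hc
  have hp : (m : ℂ) * τ + n ≠ 0 := linear_ne_zero' m n hmn τ (ne_of_gt hτ)
  have hqim : c.im ≠ 0 := by
    rw [hc]
    simp only [Complex.conj_im]
    exact neg_ne_zero.mpr (ne_of_gt hτ)
  have hq : (m : ℂ) * c + n ≠ 0 := linear_ne_zero' m n hmn c hqim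
  set G : ℕ → ℂ := fun j =>
    (j : ℂ) * (X - τ * Y) ^ (j - 1) * (X - c * Y) ^ (k - 1 - j) /
      (((m : ℂ) * τ + n) ^ (j + 1) * ((m : ℂ) * c + n) ^ (k - 1 - j)) with hG
  have hterm : ∀ r ∈ Finset.range (k - 1),
      HasDerivAt (fun t : ℂ =>
        (t - c) * (X - t * Y) ^ r * (X - c * Y) ^ (k - 2 - r) /
          (((m : ℂ) * t + n) ^ (r + 1) * ((m : ℂ) * c + n) ^ (k - 2 - r + 1)))
        (G (r + 1) - G r) τ := by
    intro r hr
    rw [Finset.mem_range] at hr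
    set s : ℕ := k - 2 - r with hs
    have h1 : HasDerivAt (fun t : ℂ => t - c) 1 τ := (hasDerivAt_id τ).sub_const c
    have h2 : HasDerivAt (fun t : ℂ => X - t * Y) (-(1 * Y)) τ :=
      ((hasDerivAt_id τ).mul_const Y).const_sub X
    have h3 : HasDerivAt (fun t : ℂ => (X - t * Y) ^ r)
        ((r : ℂ) * (X - τ * Y) ^ (r - 1) * -(1 * Y)) τ := h2.pow r
    have h4 : HasDerivAt (fun t : ℂ => (t - c) * (X - t * Y) ^ r)
        (1 * (X - τ * Y) ^ r + (τ - c) * ((r : ℂ) * (X - τ * Y) ^ (r - 1) * -(1 * Y))) τ :=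
      h1.mul h3
    have h5 : HasDerivAt (fun t : ℂ => (t - c) * (X - t * Y) ^ r * (X - c * Y) ^ s)
        ((1 * (X - τ * Y) ^ r + (τ - c) * ((r : ℂ) * (X - τ * Y) ^ (r - 1) * -(1 * Y))) *
          (X - c * Y) ^ s) τ := h4.mul_const _
    have hd0 : HasDerivAt (fun t : ℂ => (m : ℂ) * t + n) ((m : ℂ) * 1) τ :=
      ((hasDerivAt_id τ).const_mul (m : ℂ)).add_const (n : ℂ)
    have hd1 : HasDerivAt (fun t : ℂ => ((m : ℂ) * t + n) ^ (r + 1))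
        ((↑(r + 1) : ℂ) * ((m : ℂ) * τ + n) ^ (r + 1 - 1) * ((m : ℂ) * 1)) τ :=
      hd0.pow (r + 1)
    have hd2 : HasDerivAt
        (fun t : ℂ => ((m : ℂ) * t + n) ^ (r + 1) * ((m : ℂ) * c + n) ^ (s + 1))
        ((↑(r + 1) : ℂ) * ((m : ℂ) * τ + n) ^ (r + 1 - 1) * ((m : ℂ) * 1) *
          ((m : ℂ) * c + n) ^ (s + 1)) τ := hd1.mul_const _
    have hden : ((m : ℂ) * τ + n) ^ (r + 1) * ((m : ℂ) * c + n) ^ (s + 1) ≠ 0 :=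
      mul_ne_zero (pow_ne_zero _ hp) (pow_ne_zero _ hq)
    have hdiv := h5.div hd2 hden
    have hval : ((1 * (X - τ * Y) ^ r + (τ - c) * ((r : ℂ) * (X - τ * Y) ^ (r - 1) * -(1 * Y))) *
          (X - c * Y) ^ s * (((m : ℂ) * τ + n) ^ (r + 1) * ((m : ℂ) * c + n) ^ (s + 1)) -
        (τ - c) * (X - τ * Y) ^ r * (X - c * Y) ^ s *
          ((↑(r + 1) : ℂ) * ((m : ℂ) * τ + n) ^ (r + 1 - 1) * ((m : ℂ) * 1) *
            ((m : ℂ) * c + n) ^ (s + 1))) /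
        (((m : ℂ) * τ + n) ^ (r + 1) * ((m : ℂ) * c + n) ^ (s + 1)) ^ 2 =
        G (r + 1) - G r := by
      rw [key_identity (m : ℂ) (n : ℂ) X Y τ c hp hq r s]
      have e1 : k - 1 - (r + 1) = s := by omega
      have e2 : k - 1 - r = s + 1 := by omega
      have e3 : r + 1 - 1 = r := by omega
      have e4 : r + 1 + 1 = r + 2 := by omega
      simp only [hG, e1, e2, e3, e4]
    rw [hval] at hdiv
    exact hdiv
  have hsum := HasDerivAt.fun_sum hterm
  have htel : ∑ r ∈ Finset.range (k - 1), (G (r + 1) - G r) = G (k - 1) - G 0 :=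
    Finset.sum_range_sub G (k - 1)
  rw [htel] at hsum
  have hfinal : G (k - 1) - G 0 =
      ((k : ℂ) - 1) * (X - τ * Y) ^ (k - 2) / ((m : ℂ) * τ + n) ^ k := by
    have e0 : k - 1 - (k - 1) = 0 := by omega
    have e1 : k - 1 - 1 = k - 2 := by omega
    have e2 : k - 1 + 1 = k := by omega
    have e3 : ((k - 1 : ℕ) : ℂ) = (k : ℂ) - 1 := by
      push_cast [Nat.cast_sub (by omega : 1 ≤ k)]
      ring
    simp only [hG, e0, e1, e2, e3]
    simp
  rw [hfinal] at hsum
  exact hsum
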